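/- For the state |μ(n)⟩ = (1/√H_n) Σ_{i=1}^n (1/√i)|i⟩|i⟩ with H_n = Σ_{i=1}^n 1/i, the reduced state ρ_A has eigenvalues 1/(i·H_n), and for 0 < δ < 1/2 and n sufficiently large, Δ_δ(ρ_A) ≥ (1-2δ)·log n - 4 - log log(n+1). -/

import Mathlib

/-- The n-th harmonic number `H_n = Σ_{i=1}^n 1/i`. -/
noncomputable def harmonicSum (n : ℕ) : ℝ := ∑ i ∈ Finset.Icc 1 n, (1 : ℝ) / i

/-- `Δ_δ(r) = log₂ min { |J| · max_{j∈J} r_j : Σ_{j∈J} r_j ≥ 1-δ }`. -/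
noncomputable def Delta {ι : Type*} [Fintype ι] (r : ι → ℝ) (δ : ℝ) : ℝ :=
  sInf { x | ∃ J : Finset ι, 1 - δ ≤ ∑ j ∈ J, r j ∧
    x = Real.logb 2 ((J.card : ℝ) * (⨆ j ∈ (J : Set ι), r j)) }

lemma harmonicSum_eq_harmonic (n : ℕ) : harmonicSum n = (harmonic n : ℝ) := by
  rw [harmonicSum, harmonic_eq_sum_Icc]
  push_cast
  simp [one_div]

lemma log_add_one_le_harmonicSum (n : ℕ) : Real.log (n + 1) ≤ harmonicSum n := by
  rw [harmonicSum_eq_harmonic]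
  exact_mod_cast log_add_one_le_harmonic n

lemma harmonicSum_le (n : ℕ) : harmonicSum n ≤ 1 + Real.log n := by
  rw [harmonicSum_eq_harmonic]
  exact_mod_cast harmonic_le_one_add_log n

lemma harmonicSum_eq_range (n : ℕ) :
    harmonicSum n = ∑ i ∈ Finset.range n, 1 / ((i : ℝ) + 1) := by
  induction n with
  | zero => simp [harmonicSum]
  | succ n ih =>
    rw [harmonicSum, Finset.sum_Icc_succ_top (by omega), ← harmonicSum, ih,
      Finset.sum_range_succ]
    push_cast
    ring

/-- Sum of an antitone function over a finset of naturals is at most the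
sum over the `card` smallest naturals. -/
lemma sum_le_sum_range_card (f : ℕ → ℝ) (hf : ∀ a b : ℕ, a ≤ b → f b ≤ f a) :
    ∀ (k : ℕ) (S : Finset ℕ), S.card = k →
      ∑ j ∈ S, f j ≤ ∑ j ∈ Finset.range k, f j := by
  intro k
  induction k with
  | zero => intro S hS; simp [Finset.card_eq_zero.mp hS]
  | succ k ih =>
    intro S hS
    have hne : S.Nonempty := Finset.card_pos.mp (hS ▸ k.succ_pos)
    set m := S.max' hne with hm
    have hmem : m ∈ S := S.max'_mem hne
    have hcard : (S.erase m).card = k := by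
      rw [Finset.card_erase_of_mem hmem, hS]
      omega
    have hkm : k ≤ m := by
      have hsub : S ⊆ Finset.range (m + 1) := fun x hx =>
        Finset.mem_range.mpr (Nat.lt_succ_of_le (S.le_max' x hx))
      have := Finset.card_le_card hsub
      rw [hS, Finset.card_range] at this
      omega
    have h1 : ∑ j ∈ S, f j = f m + ∑ j ∈ S.erase m, f j :=
      (Finset.add_sum_erase S f hmem).symm
    rw [h1, Finset.sum_range_succ]
    have h2 := ih (S.erase m) hcard
    have h3 := hf k m hkm
    linarith

set_option maxHeartbeats 1000000 in
/-- For the embezzling state `|μ(n)⟩ = H_n^{-1/2} Σ_{i=1}^n i^{-1/2}|i⟩|i⟩`,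
whose reduced state has eigenvalues `1/(i·H_n)` for i = 1,…,n, one has for every
0 < δ < 1/2 and all sufficiently large n:
`Δ_δ(ρ_A) ≥ (1-2δ)·log₂ n - 4 - log₂ log₂ (n+1)`. -/
theorem embezzling_state_delta_lower_bound (δ : ℝ) (hδ0 : 0 < δ) (hδ : δ < 1 / 2) :
    ∃ N : ℕ, ∀ n ≥ N,
      Delta (fun j : Fin n => 1 / (((j : ℕ) + 1 : ℝ) * harmonicSum n)) δ ≥
        (1 - 2 * δ) * Real.logb 2 n - 4 - Real.logb 2 (Real.logb 2 (n + 1)) := by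
  refine ⟨16, fun n hn => ?_⟩
  have hn1 : 1 ≤ n := le_trans (by norm_num) hn
  have hnR : (16 : ℝ) ≤ (n : ℝ) := by exact_mod_cast hn
  set H := harmonicSum n with hHdef
  have hL2 : (0.6931471803 : ℝ) < Real.log 2 := Real.log_two_gt_d9
  have hL2' : Real.log 2 < 0.6931471808 := Real.log_two_lt_d9
  have hL2pos : (0 : ℝ) < Real.log 2 := by linarith
  -- basic facts about H
  have hH1 : Real.log ((n : ℝ) + 1) ≤ H := log_add_one_le_harmonicSum n
  have hH2 : H ≤ 1 + Real.log n := harmonicSum_le n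
  have hLn16 : 4 * Real.log 2 ≤ Real.log n := by
    calc 4 * Real.log 2 = Real.log (2 ^ 4) := by rw [Real.log_pow]; push_cast; ring
    _ ≤ Real.log n := Real.log_le_log (by norm_num) (by norm_num at hnR ⊢; linarith)
  have hLnpos : (0 : ℝ) < Real.log n := by linarith
  have hLn1 : Real.log n ≤ Real.log (n + 1) :=
    Real.log_le_log (by positivity) (by linarith)
  have hHpos : (0 : ℝ) < H := by linarith
  -- H ≤ log₂ (n+1)
  have hΛdef : Real.logb 2 ((n : ℝ) + 1) = Real.log ((n : ℝ) + 1) / Real.log 2 := rfl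
  have hHΛ : H ≤ Real.logb 2 ((n : ℝ) + 1) := by
    rw [hΛdef, le_div_iff₀ hL2pos]
    nlinarith [hLn16, hLn1, hL2', hLnpos]
  have hΛpos : (0 : ℝ) < Real.logb 2 ((n : ℝ) + 1) := lt_of_lt_of_le hHpos hHΛ
  -- the full sum is 1
  have hfull : ∑ j : Fin n, 1 / (((j : ℕ) + 1 : ℝ) * H) = 1 := by
    have : ∑ j : Fin n, 1 / (((j : ℕ) + 1 : ℝ) * H)
        = (∑ j : Fin n, 1 / (((j : ℕ) + 1 : ℝ))) / H := by
      rw [Finset.sum_div]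
      refine Finset.sum_congr rfl fun j _ => (div_div 1 _ H).symm
    rw [this, Fin.sum_univ_eq_sum_range (fun i => 1 / ((i : ℝ) + 1)),
      ← harmonicSum_eq_range, ← hHdef, div_self (ne_of_gt hHpos)]
  rw [Delta, ge_iff_le]
  apply le_csInf
  · exact ⟨_, ⟨Finset.univ, by rw [hfull]; linarith, rfl⟩⟩
  rintro x ⟨J, hsum, rfl⟩
  -- J is nonempty
  have hJne : J.Nonempty := by
    rcases Finset.eq_empty_or_nonempty J with h | h
    · exfalso; rw [h] at hsum; simp at hsum; linarith
    · exact h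
  set k := J.card with hk
  have hk1 : 1 ≤ k := Finset.card_pos.mpr hJne
  have hkR : (1 : ℝ) ≤ (k : ℝ) := by exact_mod_cast hk1
  set jm := J.min' hJne with hjm
  set m : ℕ := (jm : ℕ) with hmdef
  -- r is nonneg
  have hrpos : ∀ j : Fin n, 0 < 1 / (((j : ℕ) + 1 : ℝ) * H) := fun j => by positivity
  -- Fact 1 : (1-δ) * H ≤ harmonicSum k
  have fact1 : (1 - δ) * H ≤ harmonicSum k := by
    have hS : ∑ j ∈ J, 1 / (((j : ℕ) + 1 : ℝ) * H) ≤ harmonicSum k / H := by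
      have e1 : ∑ j ∈ J, 1 / (((j : ℕ) + 1 : ℝ) * H)
          = (∑ j ∈ J, 1 / (((j : ℕ) + 1 : ℝ))) / H := by
        rw [Finset.sum_div]
        refine Finset.sum_congr rfl fun j _ => (div_div 1 _ H).symm
      rw [e1]
      refine (div_le_div_iff_of_pos_right hHpos).mpr ?_
      -- sum over J ≤ harmonicSum k
      have e2 : ∑ j ∈ J, 1 / (((j : ℕ) + 1 : ℝ))
          = ∑ i ∈ J.image (Fin.val), 1 / ((i : ℝ) + 1) := by
        rw [Finset.sum_image (fun a _ b _ h => Fin.val_injective h)]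
      rw [e2, harmonicSum_eq_range]
      have hcardim : (J.image (Fin.val)).card = k := by
        rw [Finset.card_image_of_injective _ Fin.val_injective]
      exact sum_le_sum_range_card (fun i => 1 / ((i : ℝ) + 1))
        (fun a b hab => by
          apply one_div_le_one_div_of_le (by positivity)
          exact_mod_cast add_le_add_left (Nat.cast_le.mpr hab) 1)
        k _ hcardim
    have := le_trans hsum hS
    rw [le_div_iff₀ hHpos] at this
    linarith
  -- Fact 2 : harmonicSum m ≤ δ * H
  have fact2 : harmonicSum m ≤ δ * H := by
    have hJsub : J.image (fun j : Fin n => (j : ℕ) + 1) ⊆ Finset.Ioc m n := by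
      intro i hi
      rw [Finset.mem_image] at hi
      obtain ⟨j, hjJ, rfl⟩ := hi
      rw [Finset.mem_Ioc]
      have h1 : jm ≤ j := J.min'_le j hjJ
      have h2 : m ≤ (j : ℕ) := h1
      exact ⟨Nat.lt_succ_of_le h2, j.isLt⟩
    have hsplit : harmonicSum m + ∑ i ∈ Finset.Ioc m n, (1 : ℝ) / i = H := by
      rw [hHdef, harmonicSum, harmonicSum,
        show Finset.Icc 1 m = Finset.Ioc 0 m from Finset.Icc_add_one_left_eq_Ioc 0 m,
        show Finset.Icc 1 n = Finset.Ioc 0 n from Finset.Icc_add_one_left_eq_Ioc 0 n]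
      exact Finset.sum_Ioc_consecutive _ (Nat.zero_le m) (le_of_lt jm.isLt)
    have e1 : ∑ j ∈ J, 1 / (((j : ℕ) + 1 : ℝ) * H)
        = (∑ i ∈ J.image (fun j : Fin n => (j : ℕ) + 1), (1 : ℝ) / i) / H := by
      rw [Finset.sum_image (fun a _ b _ h => by
        have hv : (a : ℕ) = (b : ℕ) := by omega
        exact Fin.val_injective hv)]
      rw [Finset.sum_div]
      refine Finset.sum_congr rfl fun j _ => ?_
      push_cast
      exact (div_div 1 _ H).symm
    have hmono : (∑ i ∈ J.image (fun j : Fin n => (j : ℕ) + 1), (1 : ℝ) / i)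
        ≤ ∑ i ∈ Finset.Ioc m n, (1 : ℝ) / i :=
      Finset.sum_le_sum_of_subset_of_nonneg hJsub (fun i _ _ => by positivity)
    have h3 : 1 - δ ≤ (∑ i ∈ Finset.Ioc m n, (1 : ℝ) / i) / H := by
      refine le_trans hsum ?_
      rw [e1]
      exact (div_le_div_iff_of_pos_right hHpos).mpr hmono
    rw [le_div_iff₀ hHpos] at h3
    linarith
  -- lower bound for the supremum
  set r : Fin n → ℝ := fun j : Fin n => 1 / (((j : ℕ) + 1 : ℝ) * H) with hr
  have hMlb : r jm ≤ ⨆ j ∈ (J : Set (Fin n)), r j := by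
    have hbdd : BddAbove (Set.range fun j : Fin n =>
        ⨆ (_ : j ∈ (J : Set (Fin n))), r j) :=
      Set.Finite.bddAbove (Set.finite_range _)
    have hjmem : jm ∈ (J : Set (Fin n)) := J.min'_mem hJne
    calc r jm = ⨆ (_ : jm ∈ (J : Set (Fin n))), r jm := (ciSup_pos (f := fun _ : jm ∈ (J : Set (Fin n)) => r jm) hjmem).symm
      _ ≤ ⨆ j ∈ (J : Set (Fin n)), r j := le_ciSup hbdd jm
  have hrjm : r jm = 1 / (((m : ℝ) + 1) * H) := rfl
  have hmR : (0 : ℝ) < (m : ℝ) + 1 := by positivity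
  -- key log inequalities
  have hlogk : (1 - δ) * Real.log n - 1 ≤ Real.log k := by
    have h1 : harmonicSum k ≤ 1 + Real.log k := harmonicSum_le k
    have h2 : (1 - δ) * Real.log n ≤ (1 - δ) * H := by
      have : Real.log n ≤ H := le_trans hLn1 hH1
      nlinarith
    linarith
  have hlogm : Real.log ((m : ℝ) + 1) ≤ δ * (1 + Real.log n) := by
    have h1 : Real.log ((m : ℝ) + 1) ≤ harmonicSum m := by
      have := log_add_one_le_harmonicSum m
      push_cast at this ⊢
      linarith
    nlinarith
  have hlogH : Real.log H ≤ Real.log (Real.logb 2 ((n : ℝ) + 1)) :=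
    Real.log_le_log hHpos hHΛ
  -- assemble
  set Λ := Real.logb 2 ((n : ℝ) + 1) with hΛ
  have hApos : (0 : ℝ) < (k : ℝ) * (1 / (((m : ℝ) + 1) * H)) := by positivity
  have hlogA : Real.log ((k : ℝ) * (1 / (((m : ℝ) + 1) * H)))
      = Real.log k - Real.log ((m : ℝ) + 1) - Real.log H := by
    rw [mul_one_div, Real.log_div (by positivity) (by positivity),
      Real.log_mul (by positivity) (ne_of_gt hHpos)]
    ring
  have hkey : (1 - 2 * δ) * Real.log n - 4 * Real.log 2 - Real.log Λ
      ≤ Real.log ((k : ℝ) * (1 / (((m : ℝ) + 1) * H))) := by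
    rw [hlogA]
    linarith [hlogk, hlogm, hlogH, hL2, hδ.le]
  have hstep : (1 - 2 * δ) * Real.logb 2 n - 4 - Real.logb 2 Λ
      ≤ Real.logb 2 ((k : ℝ) * (1 / (((m : ℝ) + 1) * H))) := by
    have heq : (1 - 2 * δ) * Real.logb 2 n - 4 - Real.logb 2 Λ
        = ((1 - 2 * δ) * Real.log n - 4 * Real.log 2 - Real.log Λ) / Real.log 2 := by
      rw [Real.logb, Real.logb]
      field_simp
    rw [heq, Real.logb]
    exact (div_le_div_iff_of_pos_right hL2pos).mpr hkey
  refine le_trans hstep ?_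
  apply Real.logb_le_logb_of_le (by norm_num) hApos
  calc (k : ℝ) * (1 / (((m : ℝ) + 1) * H)) = (k : ℝ) * r jm := by rw [hrjm]
    _ ≤ (k : ℝ) * (⨆ j ∈ (J : Set (Fin n)), r j) := by
        apply mul_le_mul_of_nonneg_left hMlb (by positivity)
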